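/- (Generalized Poincaré inequality with logarithmic correction.) Let Ω ⊂ ℝ^d be a nonempty bounded convex open set. Then there exist positive constants C₁ and C₂, depending only on Ω, such that the following holds: for every function v : ℝ^d → ℝ that is differentiable on Ω, satisfies v(x) ≥ 0 for all x ∈ Ω, and is such that v and x ↦ ‖Dv(x)‖ are integrable on Ω, one has ∫_Ω v ≤ |Ω|·exp(C₁·K) + (C₂/|Ω|)·∫_Ω ‖Dv(x)‖ dx, where K := ∫_Ω max(log(v(x)), 0) dx and |Ω| denotes the Lebesgue measure of Ω. -/

import Mathlib

open MeasureTheory Real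

open scoped ENNReal


theorem aux_lintegral_affine_le {d : ℕ} (g : EuclideanSpace ℝ (Fin d) → ℝ≥0∞)
    (hg : Measurable g) {c : ℝ} (hc : 0 < c) (b : EuclideanSpace ℝ (Fin d))
    (s Ω : Set (EuclideanSpace ℝ (Fin d))) (hΩ : MeasurableSet Ω)
    (himg : ∀ y ∈ s, c • y + b ∈ Ω) :
    ∫⁻ y in s, g (c • y + b) ≤ ENNReal.ofReal ((c ^ d)⁻¹) * ∫⁻ z in Ω, g z := by
  set f : EuclideanSpace ℝ (Fin d) → ℝ≥0∞ := Ω.indicator g with hf_def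
  have hf : Measurable f := hg.indicator hΩ
  have hT : Measurable fun y : EuclideanSpace ℝ (Fin d) => c • y + b := by fun_prop
  have step1 : ∫⁻ y in s, g (c • y + b) ≤ ∫⁻ y in s, f (c • y + b) := by
    refine setLIntegral_mono (hf.comp hT) fun y hy => ?_
    rw [hf_def, Set.indicator_of_mem (himg y hy)]
  have step2 : ∫⁻ y in s, f (c • y + b) ≤ ∫⁻ y, f (c • y + b) :=
    setLIntegral_le_lintegral _ _
  have hcu : IsUnit c := (isUnit_iff_ne_zero).2 hc.ne'
  have step3 : ∫⁻ y, f (c • y + b) = ENNReal.ofReal ((c ^ d)⁻¹) * ∫⁻ z, f z := by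
    have hmap := Measure.map_addHaar_smul (volume : Measure (EuclideanSpace ℝ (Fin d))) hc.ne'
    have hfb : Measurable fun z : EuclideanSpace ℝ (Fin d) => f (z + b) :=
      hf.comp (by fun_prop)
    calc ∫⁻ y, f (c • y + b)
        = ∫⁻ a, (fun z => f (z + b)) a
          ∂((volume : Measure (EuclideanSpace ℝ (Fin d))).map (fun y => c • y)) := by
          rw [lintegral_map hfb (by fun_prop)]
      _ = ENNReal.ofReal |(c ^ Module.finrank ℝ (EuclideanSpace ℝ (Fin d)))⁻¹| *
            ∫⁻ z, f (z + b) := by rw [hmap, lintegral_smul_measure, smul_eq_mul]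
      _ = ENNReal.ofReal ((c ^ d)⁻¹) * ∫⁻ z, f z := by
          rw [lintegral_add_right_eq_self]
          congr 2
          rw [finrank_euclideanSpace_fin, abs_of_nonneg (by positivity)]
  have step4 : ∫⁻ z, f z = ∫⁻ z in Ω, g z := by
    rw [hf_def, lintegral_indicator hΩ]
  calc ∫⁻ y in s, g (c • y + b) ≤ ∫⁻ y, f (c • y + b) := step1.trans step2
    _ = ENNReal.ofReal ((c ^ d)⁻¹) * ∫⁻ z in Ω, g z := by rw [step3, step4]


theorem aux_ftc {d : ℕ} {Ω : Set (EuclideanSpace ℝ (Fin d))} (hconv : Convex ℝ Ω)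
    {v : EuclideanSpace ℝ (Fin d) → ℝ} (hdiff : ∀ x ∈ Ω, DifferentiableAt ℝ v x)
    {x y : EuclideanSpace ℝ (Fin d)} (hx : x ∈ Ω) (hy : y ∈ Ω) {Dd : ℝ}
    (hD : ‖x - y‖ ≤ Dd) :
    ENNReal.ofReal (v x) ≤ ENNReal.ofReal (v y) +
      ENNReal.ofReal Dd * ∫⁻ t in Set.Ioc (0:ℝ) 1, (‖fderiv ℝ v (y + t • (x - y))‖₊ : ℝ≥0∞) := by
  rcases eq_or_ne x y with rfl | hxy
  · exact le_add_right le_rfl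
  have hxy' : 0 < ‖x - y‖ := by
    rw [norm_pos_iff]
    exact sub_ne_zero.2 hxy
  have hDpos : 0 < Dd := lt_of_lt_of_le hxy' hD
  set γ : ℝ → EuclideanSpace ℝ (Fin d) := fun t => y + t • (x - y) with hγ_def
  have hγc : Continuous γ := by fun_prop
  have hγmem : ∀ t ∈ Set.Icc (0:ℝ) 1, γ t ∈ Ω := by
    intro t ht
    have h1 : (1 - t) • y + t • x ∈ Ω :=
      hconv hy hx (by linarith [ht.2]) ht.1 (by ring)
    have h2 : γ t = (1 - t) • y + t • x := by
      simp only [hγ_def]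
      module
    rw [h2]; exact h1
  set h : ℝ → ℝ := fun t => ‖fderiv ℝ v (γ t)‖ with hh_def
  have hhm : Measurable h := (measurable_fderiv ℝ v).norm.comp hγc.measurable
  set L : ℝ≥0∞ := ∫⁻ t in Set.Ioc (0:ℝ) 1, (‖fderiv ℝ v (γ t)‖₊ : ℝ≥0∞) with hL_def
  rcases eq_or_ne L ∞ with hL | hL
  · rw [hL, ENNReal.mul_top (by simp [ENNReal.ofReal_eq_zero, not_le, hDpos])]
    simp
  -- L is finite: h is integrable on Ioc 0 1
  have hint : IntegrableOn h (Set.Ioc (0:ℝ) 1) volume := by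
    refine ⟨hhm.aestronglyMeasurable, ?_⟩
    rw [hasFiniteIntegral_iff_ofReal (Filter.Eventually.of_forall fun t => norm_nonneg _)]
    have : ∀ t, ENNReal.ofReal (h t) = (‖fderiv ℝ v (γ t)‖₊ : ℝ≥0∞) := fun t =>
      ofReal_norm _
    simp only [this, hh_def, ofReal_norm, enorm_eq_nnnorm]
    exact hL.lt_top
  have hII : IntervalIntegrable h volume 0 1 := by
    rw [intervalIntegrable_iff, Set.uIoc_of_le zero_le_one]
    exact hint
  set φ' : ℝ → ℝ := fun t => (fderiv ℝ v (γ t)) (x - y) with hφ'_def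
  have hφ'bound : ∀ t, ‖φ' t‖ ≤ ‖x - y‖ * h t := by
    intro t
    calc ‖φ' t‖ ≤ ‖fderiv ℝ v (γ t)‖ * ‖x - y‖ := (fderiv ℝ v (γ t)).le_opNorm _
      _ = ‖x - y‖ * h t := by rw [mul_comm]
  have hbII : IntervalIntegrable (fun t => ‖x - y‖ * h t) volume 0 1 :=
    hII.const_mul _
  have hφ'II : IntervalIntegrable φ' volume 0 1 := by
    rw [intervalIntegrable_iff, Set.uIoc_of_le zero_le_one]
    refine Integrable.mono' (hbII.def'.mono_set ?_) ?_ ?_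
    · rw [Set.uIoc_of_le zero_le_one]
    · exact ((measurable_fderiv_apply_const ℝ v (x - y)).comp
        hγc.measurable).aestronglyMeasurable
    · exact Filter.Eventually.of_forall hφ'bound
  have hderiv : ∀ t ∈ Set.uIcc (0:ℝ) 1, HasDerivAt (fun s => v (γ s)) (φ' t) t := by
    intro t ht
    rw [Set.uIcc_of_le zero_le_one] at ht
    have hγd : HasDerivAt γ (x - y) t := by
      simpa [hγ_def] using ((hasDerivAt_id t).smul_const (x - y)).const_add y
    exact ((hdiff _ (hγmem t ht)).hasFDerivAt.comp_hasDerivAt t hγd)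
  have hftc : ∫ t in (0:ℝ)..1, φ' t = v (γ 1) - v (γ 0) :=
    intervalIntegral.integral_eq_sub_of_hasDerivAt hderiv hφ'II
  have hγ1 : γ 1 = x := by simp [hγ_def]
  have hγ0 : γ 0 = y := by simp [hγ_def]
  have hmono : ∫ t in (0:ℝ)..1, φ' t ≤ ∫ t in (0:ℝ)..1, ‖x - y‖ * h t := by
    refine intervalIntegral.integral_mono_on zero_le_one hφ'II hbII fun t _ => ?_
    exact (le_abs_self _).trans (hφ'bound t)
  have key : v x ≤ v y + ‖x - y‖ * ∫ t in Set.Ioc (0:ℝ) 1, h t := by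
    rw [hγ1, hγ0] at hftc
    have : v x - v y ≤ ‖x - y‖ * ∫ t in Set.Ioc (0:ℝ) 1, h t := by
      rw [← hftc]
      calc ∫ t in (0:ℝ)..1, φ' t ≤ ∫ t in (0:ℝ)..1, ‖x - y‖ * h t := hmono
        _ = ‖x - y‖ * ∫ t in (0:ℝ)..1, h t := intervalIntegral.integral_const_mul _ _
        _ = ‖x - y‖ * ∫ t in Set.Ioc (0:ℝ) 1, h t := by
            rw [intervalIntegral.integral_of_le zero_le_one]
    linarith
  have hIr : ENNReal.ofReal (∫ t in Set.Ioc (0:ℝ) 1, h t) = L := by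
    rw [ofReal_integral_eq_lintegral_ofReal hint
      (Filter.Eventually.of_forall fun t => norm_nonneg _)]
    simp only [hh_def, ofReal_norm, enorm_eq_nnnorm, hL_def]
  calc ENNReal.ofReal (v x) ≤ ENNReal.ofReal (v y + ‖x - y‖ * ∫ t in Set.Ioc (0:ℝ) 1, h t) :=
        ENNReal.ofReal_le_ofReal key
    _ ≤ ENNReal.ofReal (v y) + ENNReal.ofReal (‖x - y‖ * ∫ t in Set.Ioc (0:ℝ) 1, h t) :=
        ENNReal.ofReal_add_le
    _ = ENNReal.ofReal (v y) + ENNReal.ofReal ‖x - y‖ *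
          ENNReal.ofReal (∫ t in Set.Ioc (0:ℝ) 1, h t) := by
        rw [ENNReal.ofReal_mul (norm_nonneg _)]
    _ ≤ ENNReal.ofReal (v y) + ENNReal.ofReal Dd * L := by
        rw [hIr]
        exact add_le_add_right (mul_le_mul_left (ENNReal.ofReal_le_ofReal hD) _) _


section main
variable {d : ℕ}

set_option maxHeartbeats 1000000 in
theorem main_thm (Ω : Set (EuclideanSpace ℝ (Fin d)))
    (hne : Ω.Nonempty) (hbd : Bornology.IsBounded Ω) (hconv : Convex ℝ Ω)
    (hopen : IsOpen Ω) :
    ∃ C₁ C₂ : ℝ, 0 < C₁ ∧ 0 < C₂ ∧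
      ∀ v : EuclideanSpace ℝ (Fin d) → ℝ,
        (∀ x ∈ Ω, DifferentiableAt ℝ v x) →
        (∀ x ∈ Ω, 0 ≤ v x) →
        IntegrableOn v Ω volume →
        IntegrableOn (fun x => ‖fderiv ℝ v x‖) Ω volume →
        ∫ x in Ω, v x ≤
          (volume Ω).toReal * Real.exp (C₁ * ∫ x in Ω, max (Real.log (v x)) 0)
            + (C₂ / (volume Ω).toReal) * ∫ x in Ω, ‖fderiv ℝ v x‖ := by
  have hΩm : MeasurableSet Ω := hopen.measurableSet
  have hμpos : 0 < volume Ω := hopen.measure_pos volume hne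
  have hμfin : volume Ω < ⊤ := hbd.measure_lt_top
  set m : ℝ := (volume Ω).toReal with hm_def
  have hm : 0 < m := ENNReal.toReal_pos hμpos.ne' hμfin.ne
  set Dd : ℝ := Metric.diam Ω + 1 with hDd_def
  have hDd : 0 < Dd := by positivity
  have hdist : ∀ x ∈ Ω, ∀ y ∈ Ω, ‖x - y‖ ≤ Dd := by
    intro x hx y hy
    rw [← dist_eq_norm]
    calc dist x y ≤ Metric.diam Ω := Metric.dist_le_diam_of_mem hbd hx hy
      _ ≤ Dd := by simp [hDd_def]
  refine ⟨2 / m, 2 ^ (d + 2) * Dd * m, by positivity, by positivity, ?_⟩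
  intro v hdiff hnn hint hint'
  set K : ℝ := ∫ x in Ω, max (Real.log (v x)) 0 with hK_def
  have hcont : ContinuousOn v Ω := fun x hx => (hdiff x hx).continuousAt.continuousWithinAt
  have hvm : AEMeasurable v (volume.restrict Ω) := hcont.aemeasurable hΩm
  have hlogm : AEMeasurable (fun x => max (Real.log (v x)) 0) (volume.restrict Ω) :=
    (Real.measurable_log.comp_aemeasurable hvm).max aemeasurable_const
  have hlognn : ∀ x, 0 ≤ max (Real.log (v x)) 0 := fun x => le_max_right _ _
  have hKnn : 0 ≤ K := integral_nonneg hlognn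
  -- integrability of (log v)⁺
  have hKint : IntegrableOn (fun x => max (Real.log (v x)) 0) Ω volume := by
    refine Integrable.mono' hint hlogm.aestronglyMeasurable ?_
    refine (ae_restrict_iff' hΩm).2 (Filter.Eventually.of_forall fun x hx => ?_)
    rw [Real.norm_eq_abs, abs_of_nonneg (hlognn x)]
    rcases eq_or_lt_of_le (hnn x hx) with h0 | h0
    · simp [← h0, Real.log_zero]
    · have := Real.log_le_sub_one_of_pos h0
      simp only [max_le_iff]
      constructor <;> linarith [hnn x hx]
  set M : ℝ := Real.exp (2 / m * K) with hM_def
  have hM1 : 1 ≤ M := Real.one_le_exp (by positivity)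
  set S : Set (EuclideanSpace ℝ (Fin d)) := Ω ∩ v ⁻¹' Set.Ioi M with hS_def
  have hSopen : IsOpen S := hcont.isOpen_inter_preimage hopen isOpen_Ioi
  have hSm : MeasurableSet S := hSopen.measurableSet
  have hSsub : S ⊆ Ω := Set.inter_subset_left
  -- Chebyshev: volume S ≤ volume Ω / 2
  have hS_half : volume S ≤ volume Ω / 2 := by
    rcases eq_or_lt_of_le hKnn with hK0 | hKpos
    · -- K = 0 : (log v)⁺ = 0 a.e. on Ω, and M = 1
      have hae : (fun x => max (Real.log (v x)) 0) =ᵐ[volume.restrict Ω] 0 := by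
        rw [← integral_eq_zero_iff_of_nonneg (fun x => hlognn x) hKint]
        exact hK0.symm
      have hnull : (volume.restrict Ω) {x | max (Real.log (v x)) 0 ≠ 0} = 0 := by
        simpa [Filter.EventuallyEq, ae_iff] using hae
      have hsub2 : S ⊆ {x | max (Real.log (v x)) 0 ≠ 0} := by
        intro x hx
        have hvx : M < v x := hx.2
        have hM1' : (1:ℝ) ≤ M := hM1
        have : 0 < Real.log (v x) := Real.log_pos (lt_of_le_of_lt hM1' hvx)
        simp only [Set.mem_setOf_eq]
        rw [max_eq_left this.le]
        exact this.ne'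
      have : volume S = 0 := by
        have h1 : volume S = (volume.restrict Ω) S := by
          rw [Measure.restrict_apply hSm, Set.inter_eq_left.2 hSsub]
        rw [h1]
        exact measure_mono_null hsub2 hnull
      simp [this]
    · -- K > 0 : Chebyshev
      set ε : ℝ := 2 / m * K with hε_def
      have hε : 0 < ε := by positivity
      have hcheb := mul_meas_ge_le_lintegral₀ (μ := volume.restrict Ω)
        (hlogm.ennreal_ofReal) (ENNReal.ofReal ε)
      have hRHS : ∫⁻ x in Ω, ENNReal.ofReal (max (Real.log (v x)) 0) = ENNReal.ofReal K :=
        (ofReal_integral_eq_lintegral_ofReal hKint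
          (Filter.Eventually.of_forall hlognn)).symm
      have hSsub3 : S ⊆ {x | ENNReal.ofReal ε ≤ ENNReal.ofReal (max (Real.log (v x)) 0)} := by
        intro x hx
        have hvx : M < v x := hx.2
        have hlog : ε ≤ Real.log (v x) := by
          have : M ≤ v x := hvx.le
          have hvpos : 0 < v x := lt_trans (by positivity : (0:ℝ) < M) hvx
          calc ε = Real.log M := by rw [hM_def, Real.log_exp]
            _ ≤ Real.log (v x) := Real.log_le_log (by positivity) this
        exact ENNReal.ofReal_le_ofReal (hlog.trans (le_max_left _ _))
      have hmeasS : volume S ≤ (volume.restrict Ω)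
          {x | ENNReal.ofReal ε ≤ ENNReal.ofReal (max (Real.log (v x)) 0)} := by
        have h1 : volume S = (volume.restrict Ω) S := by
          rw [Measure.restrict_apply hSm, Set.inter_eq_left.2 hSsub]
        rw [h1]
        exact measure_mono hSsub3
      have hKey : ENNReal.ofReal ε * volume S ≤ ENNReal.ofReal K :=
        le_trans (mul_le_mul_right hmeasS _) (hcheb.trans hRHS.le)
      have hKeq : ENNReal.ofReal K = ENNReal.ofReal ε * ENNReal.ofReal (m / 2) := by
        rw [← ENNReal.ofReal_mul hε.le]
        congr 1
        rw [hε_def]; field_simp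
      rw [hKeq] at hKey
      have hS2 : volume S ≤ ENNReal.ofReal (m / 2) :=
        (ENNReal.mul_le_mul_iff_right (by simp [ENNReal.ofReal_eq_zero, not_le, hε])
          ENNReal.ofReal_ne_top).1 hKey
      have : ENNReal.ofReal (m / 2) = volume Ω / 2 := by
        rw [ENNReal.ofReal_div_of_pos (by norm_num), hm_def,
          ENNReal.ofReal_toReal hμfin.ne]
        norm_num
      rwa [this] at hS2
  set A : Set (EuclideanSpace ℝ (Fin d)) := Ω \ S with hA_def
  have hAm : MeasurableSet A := hΩm.diff hSm
  have hAΩ : A ⊆ Ω := Set.diff_subset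
  have hAfin : volume A < ⊤ := lt_of_le_of_lt (measure_mono hAΩ) hμfin
  have hA_half : volume Ω ≤ 2 * volume A := by
    have h1 : volume Ω ≤ volume A + volume S := by
      rw [← Set.diff_union_of_subset hSsub]
      exact measure_union_le _ _
    have h2 : volume Ω / 2 ≤ volume A := by
      have h3 : volume Ω / 2 + volume Ω / 2 ≤ volume A + volume Ω / 2 := by
        rw [ENNReal.add_halves]
        exact h1.trans (add_le_add_right hS_half _)
      exact (ENNReal.add_le_add_iff_right (by
        exact (lt_of_le_of_lt (ENNReal.half_le_self) hμfin).ne : volume Ω / 2 ≠ ⊤)).1 h3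
    calc volume Ω = 2 * (volume Ω / 2) := by
          rw [ENNReal.mul_div_cancel (by norm_num) (by norm_num)]
      _ ≤ 2 * volume A := mul_le_mul_right h2 _
  have hApos : volume A ≠ 0 := by
    intro h0
    rw [h0, mul_zero] at hA_half
    exact hμpos.ne' (le_antisymm hA_half zero_le)
  have hvA : ∀ y ∈ A, v y ≤ M := by
    intro y hy
    by_contra hlt
    exact hy.2 ⟨hy.1, lt_of_not_ge hlt⟩
  -- gradient lintegral
  set g : EuclideanSpace ℝ (Fin d) → ℝ≥0∞ := fun z => (‖fderiv ℝ v z‖₊ : ℝ≥0∞) with hg_def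
  have hgm : Measurable g := (measurable_fderiv ℝ v).enorm
  set G : ℝ≥0∞ := ∫⁻ z in Ω, g z with hG_def
  have hnormnn : 0 ≤ ∫ x in Ω, ‖fderiv ℝ v x‖ := integral_nonneg fun x => norm_nonneg _
  have hGof : ENNReal.ofReal (∫ x in Ω, ‖fderiv ℝ v x‖) = G := by
    rw [ofReal_integral_eq_lintegral_ofReal hint'
      (Filter.Eventually.of_forall fun x => norm_nonneg _)]
    simp only [hG_def, hg_def, ofReal_norm, enorm_eq_nnnorm]
  have hGfin : G ≠ ⊤ := by rw [← hGof]; exact ENNReal.ofReal_ne_top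
  set L : EuclideanSpace ℝ (Fin d) → EuclideanSpace ℝ (Fin d) → ℝ≥0∞ :=
    fun x y => ∫⁻ t in Set.Ioc (0:ℝ) 1, g (y + t • (x - y)) with hL_def
  have hpointwise : ∀ x ∈ Ω, ∀ y ∈ A, ENNReal.ofReal (v x) ≤
      ENNReal.ofReal (v y) + ENNReal.ofReal Dd * L x y :=
    fun x hx y hy => aux_ftc hconv hdiff hx (hAΩ hy) (hdist x hx y (hAΩ hy))
  set X : ℝ≥0∞ := ENNReal.ofReal (∫ x in Ω, v x) with hX_def
  have hXeq : ∫⁻ x in Ω, ENNReal.ofReal (v x) = X := by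
    rw [hX_def, ofReal_integral_eq_lintegral_ofReal hint
      ((ae_restrict_iff' hΩm).2 (Filter.Eventually.of_forall hnn))]
  set I₁ : Set ℝ := Set.Ioc 0 (1/2) with hI₁
  set I₂ : Set ℝ := Set.Ioc (1/2) 1 with hI₂
  have hIsplit : Set.Ioc (0:ℝ) 1 = I₁ ∪ I₂ :=
    (Set.Ioc_union_Ioc_eq_Ioc (by norm_num) (by norm_num)).symm
  have hIdisj : Disjoint I₁ I₂ := Set.Ioc_disjoint_Ioc_of_le le_rfl
  -- joint measurability of the shifted integrals
  have hmap : ∀ s : Set ℝ,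
      Measurable (fun p : EuclideanSpace ℝ (Fin d) × EuclideanSpace ℝ (Fin d) =>
        ∫⁻ t in s, g (p.2 + t • (p.1 - p.2))) := by
    intro s
    have hh : Measurable (fun q :
        (EuclideanSpace ℝ (Fin d) × EuclideanSpace ℝ (Fin d)) × ℝ =>
        g (q.1.2 + q.2 • (q.1.1 - q.1.2))) := hgm.comp (by fun_prop)
    exact hh.lintegral_prod_right'
  have hmap' : ∀ (s : Set ℝ) (x : EuclideanSpace ℝ (Fin d)),
      Measurable (fun y : EuclideanSpace ℝ (Fin d) => ∫⁻ t in s, g (y + t • (x - y))) := by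
    intro s x
    have hh : Measurable (fun q : EuclideanSpace ℝ (Fin d) × ℝ =>
        g (q.1 + q.2 • (x - q.1))) := hgm.comp (by fun_prop)
    exact hh.lintegral_prod_right'
  set J : ℝ≥0∞ := ∫⁻ x in Ω, ∫⁻ y in A, L x y with hJ_def
  have hpow : ∀ c : ℝ, (1/2 : ℝ) ≤ c → ((c ^ d)⁻¹ : ℝ) ≤ 2 ^ d := by
    intro c hc
    have h1 : ((1:ℝ)/2) ^ d ≤ c ^ d := pow_le_pow_left₀ (by norm_num) hc d
    have h2 : ((c ^ d)⁻¹ : ℝ) ≤ (((1:ℝ)/2) ^ d)⁻¹ := by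
      apply inv_anti₀ (by positivity) h1
    calc ((c ^ d)⁻¹ : ℝ) ≤ (((1:ℝ)/2) ^ d)⁻¹ := h2
      _ = 2 ^ d := by rw [one_div, inv_pow, inv_inv]
  have hJ₁ : (∫⁻ x in Ω, ∫⁻ y in A, ∫⁻ t in I₁, g (y + t • (x - y)))
      ≤ ENNReal.ofReal (2 ^ d) * G * volume Ω := by
    have hxbound : ∀ x ∈ Ω, (∫⁻ y in A, ∫⁻ t in I₁, g (y + t • (x - y)))
        ≤ ENNReal.ofReal (2 ^ d) * G := by
      intro x hx
      have hswap : (∫⁻ y in A, ∫⁻ t in I₁, g (y + t • (x - y)))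
          = ∫⁻ t in I₁, ∫⁻ y in A, g (y + t • (x - y)) := by
        refine lintegral_lintegral_swap ?_
        exact (hgm.comp (by fun_prop : Measurable fun q :
          EuclideanSpace ℝ (Fin d) × ℝ => q.1 + q.2 • (x - q.1))).aemeasurable
      rw [hswap]
      have hinner : ∀ t ∈ I₁, (∫⁻ y in A, g (y + t • (x - y)))
          ≤ ENNReal.ofReal (2 ^ d) * G := by
        intro t ht
        rw [hI₁, Set.mem_Ioc] at ht
        have hc : (0:ℝ) < 1 - t := by linarith [ht.2]
        have hrw : (∫⁻ y in A, g (y + t • (x - y)))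
            = ∫⁻ y in A, g ((1 - t) • y + t • x) := by
          refine lintegral_congr fun y => ?_
          congr 1
          module
        rw [hrw]
        have himg : ∀ y ∈ A, (1 - t) • y + t • x ∈ Ω := fun y hy =>
          hconv (hAΩ hy) hx (by linarith [ht.2]) ht.1.le (by ring)
        refine (aux_lintegral_affine_le g hgm hc (t • x) A Ω hΩm himg).trans ?_
        exact mul_le_mul_left (ENNReal.ofReal_le_ofReal (hpow _ (by linarith [ht.2]))) _
      calc ∫⁻ t in I₁, ∫⁻ y in A, g (y + t • (x - y))
          ≤ ∫⁻ _ in I₁, ENNReal.ofReal (2 ^ d) * G := setLIntegral_mono' measurableSet_Ioc hinner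
        _ = ENNReal.ofReal (2 ^ d) * G * volume I₁ := setLIntegral_const _ _
        _ ≤ ENNReal.ofReal (2 ^ d) * G * 1 := by
            refine mul_le_mul_right ?_ _
            rw [hI₁, Real.volume_Ioc]
            exact ENNReal.ofReal_le_one.2 (by norm_num)
        _ = ENNReal.ofReal (2 ^ d) * G := mul_one _
    calc (∫⁻ x in Ω, ∫⁻ y in A, ∫⁻ t in I₁, g (y + t • (x - y)))
        ≤ ∫⁻ _ in Ω, ENNReal.ofReal (2 ^ d) * G := setLIntegral_mono' hΩm hxbound
      _ = ENNReal.ofReal (2 ^ d) * G * volume Ω := setLIntegral_const _ _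
  have hJ₂ : (∫⁻ x in Ω, ∫⁻ y in A, ∫⁻ t in I₂, g (y + t • (x - y)))
      ≤ ENNReal.ofReal (2 ^ d) * G * volume Ω := by
    have hswap0 : (∫⁻ x in Ω, ∫⁻ y in A, ∫⁻ t in I₂, g (y + t • (x - y)))
        = ∫⁻ y in A, ∫⁻ x in Ω, ∫⁻ t in I₂, g (y + t • (x - y)) :=
      lintegral_lintegral_swap ((hmap I₂).aemeasurable)
    rw [hswap0]
    have hybound : ∀ y ∈ A, (∫⁻ x in Ω, ∫⁻ t in I₂, g (y + t • (x - y)))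
        ≤ ENNReal.ofReal (2 ^ d) * G := by
      intro y hy
      have hswap : (∫⁻ x in Ω, ∫⁻ t in I₂, g (y + t • (x - y)))
          = ∫⁻ t in I₂, ∫⁻ x in Ω, g (y + t • (x - y)) := by
        refine lintegral_lintegral_swap ?_
        exact (hgm.comp (by fun_prop : Measurable fun q :
          EuclideanSpace ℝ (Fin d) × ℝ => y + q.2 • (q.1 - y))).aemeasurable
      rw [hswap]
      have hinner : ∀ t ∈ I₂, (∫⁻ x in Ω, g (y + t • (x - y)))
          ≤ ENNReal.ofReal (2 ^ d) * G := by
        intro t ht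
        rw [hI₂, Set.mem_Ioc] at ht
        have hc : (0:ℝ) < t := by linarith [ht.1]
        have hrw : (∫⁻ x in Ω, g (y + t • (x - y)))
            = ∫⁻ x in Ω, g (t • x + (1 - t) • y) := by
          refine lintegral_congr fun x => ?_
          congr 1
          module
        rw [hrw]
        have himg : ∀ x ∈ Ω, t • x + (1 - t) • y ∈ Ω := fun x hx =>
          hconv hx (hAΩ hy) hc.le (by linarith [ht.2]) (by ring)
        refine (aux_lintegral_affine_le g hgm hc ((1 - t) • y) Ω Ω hΩm himg).trans ?_
        exact mul_le_mul_left (ENNReal.ofReal_le_ofReal (hpow _ (by linarith [ht.1]))) _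
      calc ∫⁻ t in I₂, ∫⁻ x in Ω, g (y + t • (x - y))
          ≤ ∫⁻ _ in I₂, ENNReal.ofReal (2 ^ d) * G := setLIntegral_mono' measurableSet_Ioc hinner
        _ = ENNReal.ofReal (2 ^ d) * G * volume I₂ := setLIntegral_const _ _
        _ ≤ ENNReal.ofReal (2 ^ d) * G * 1 := by
            refine mul_le_mul_right ?_ _
            rw [hI₂, Real.volume_Ioc]
            exact ENNReal.ofReal_le_one.2 (by norm_num)
        _ = ENNReal.ofReal (2 ^ d) * G := mul_one _
    calc (∫⁻ y in A, ∫⁻ x in Ω, ∫⁻ t in I₂, g (y + t • (x - y)))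
        ≤ ∫⁻ _ in A, ENNReal.ofReal (2 ^ d) * G := setLIntegral_mono' hAm hybound
      _ = ENNReal.ofReal (2 ^ d) * G * volume A := setLIntegral_const _ _
      _ ≤ ENNReal.ofReal (2 ^ d) * G * volume Ω := mul_le_mul_right (measure_mono hAΩ) _
  have hJ : J ≤ ENNReal.ofReal (2 ^ (d + 1)) * G * volume Ω := by
    have hsplit : J = (∫⁻ x in Ω, ∫⁻ y in A, ∫⁻ t in I₁, g (y + t • (x - y)))
        + ∫⁻ x in Ω, ∫⁻ y in A, ∫⁻ t in I₂, g (y + t • (x - y)) := by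
      have hin : ∀ x, (∫⁻ y in A, L x y)
          = (∫⁻ y in A, ∫⁻ t in I₁, g (y + t • (x - y)))
            + ∫⁻ y in A, ∫⁻ t in I₂, g (y + t • (x - y)) := by
        intro x
        have hLxy : ∀ y, L x y = (∫⁻ t in I₁, g (y + t • (x - y)))
            + ∫⁻ t in I₂, g (y + t • (x - y)) := by
          intro y
          simp only [hL_def]
          rw [hIsplit, lintegral_union measurableSet_Ioc hIdisj]
        rw [lintegral_congr hLxy]
        exact lintegral_add_left' (hmap' I₁ x).aemeasurable _
      rw [hJ_def, lintegral_congr hin]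
      exact lintegral_add_left' ((hmap I₁).lintegral_prod_right').aemeasurable _
    rw [hsplit]
    calc _ ≤ ENNReal.ofReal (2 ^ d) * G * volume Ω + ENNReal.ofReal (2 ^ d) * G * volume Ω :=
          add_le_add hJ₁ hJ₂
      _ = (2 : ℝ≥0∞) * ENNReal.ofReal (2 ^ d) * G * volume Ω := by ring
      _ = ENNReal.ofReal (2 ^ (d + 1)) * G * volume Ω := by
          have h2eq : (2:ℝ≥0∞) * ENNReal.ofReal ((2:ℝ) ^ d) = ENNReal.ofReal ((2:ℝ) ^ (d + 1)) := by
            rw [show ((2:ℝ) ^ (d + 1)) = 2 * 2 ^ d by ring, ENNReal.ofReal_mul (by norm_num)]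
            norm_num
          rw [h2eq]
  have hvy_meas : AEMeasurable (fun y => ENNReal.ofReal (v y)) (volume.restrict A) :=
    ENNReal.measurable_ofReal.comp_aemeasurable
      (hvm.mono_measure (Measure.restrict_mono hAΩ le_rfl))
  have hmain : X * volume A ≤ ENNReal.ofReal M * volume A * volume Ω + ENNReal.ofReal Dd * J := by
    have lhs_eq : ∫⁻ x in Ω, ∫⁻ y in A, ENNReal.ofReal (v x) = X * volume A := by
      have h1 : ∀ x : EuclideanSpace ℝ (Fin d),
          (∫⁻ _ in A, ENNReal.ofReal (v x)) = ENNReal.ofReal (v x) * volume A :=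
        fun x => setLIntegral_const _ _
      rw [lintegral_congr h1, lintegral_mul_const' _ _ hAfin.ne, hXeq]
    have step1 : ∫⁻ x in Ω, ∫⁻ y in A, ENNReal.ofReal (v x)
        ≤ ∫⁻ x in Ω, ∫⁻ y in A, (ENNReal.ofReal (v y) + ENNReal.ofReal Dd * L x y) :=
      setLIntegral_mono' hΩm fun x hx =>
        setLIntegral_mono' hAm fun y hy => hpointwise x hx y hy
    have step2 : ∫⁻ x in Ω, ∫⁻ y in A, (ENNReal.ofReal (v y) + ENNReal.ofReal Dd * L x y)
        = (∫⁻ y in A, ENNReal.ofReal (v y)) * volume Ω + ENNReal.ofReal Dd * J := by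
      have hxfix : ∀ x, (∫⁻ y in A, (ENNReal.ofReal (v y) + ENNReal.ofReal Dd * L x y))
          = (∫⁻ y in A, ENNReal.ofReal (v y)) + ENNReal.ofReal Dd * ∫⁻ y in A, L x y := by
        intro x
        rw [lintegral_add_left' hvy_meas, lintegral_const_mul' _ _ ENNReal.ofReal_ne_top]
      rw [lintegral_congr hxfix, lintegral_add_left' aemeasurable_const,
        setLIntegral_const, lintegral_const_mul' _ _ ENNReal.ofReal_ne_top, hJ_def]
    have hAv : (∫⁻ y in A, ENNReal.ofReal (v y)) ≤ ENNReal.ofReal M * volume A :=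
      le_trans (setLIntegral_mono' hAm fun y hy => ENNReal.ofReal_le_ofReal (hvA y hy))
        (setLIntegral_const _ _).le
    calc X * volume A = ∫⁻ x in Ω, ∫⁻ y in A, ENNReal.ofReal (v x) := lhs_eq.symm
      _ ≤ ∫⁻ x in Ω, ∫⁻ y in A, (ENNReal.ofReal (v y) + ENNReal.ofReal Dd * L x y) := step1
      _ = (∫⁻ y in A, ENNReal.ofReal (v y)) * volume Ω + ENNReal.ofReal Dd * J := step2
      _ ≤ ENNReal.ofReal M * volume A * volume Ω + ENNReal.ofReal Dd * J :=
          add_le_add (mul_le_mul_left hAv _) le_rfl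
  have hΩAinv : volume Ω * (volume A)⁻¹ ≤ 2 := by
    calc volume Ω * (volume A)⁻¹ ≤ 2 * volume A * (volume A)⁻¹ := mul_le_mul_left hA_half _
      _ = 2 * (volume A * (volume A)⁻¹) := by ring
      _ = 2 := by rw [ENNReal.mul_inv_cancel hApos hAfin.ne, mul_one]
  have hfinal : X ≤ ENNReal.ofReal M * volume Ω
      + ENNReal.ofReal Dd * ENNReal.ofReal (2 ^ (d + 2)) * G := by
    have hAinv : volume A * (volume A)⁻¹ = 1 := ENNReal.mul_inv_cancel hApos hAfin.ne
    calc X = X * volume A * (volume A)⁻¹ := by rw [mul_assoc, hAinv, mul_one]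
      _ ≤ (ENNReal.ofReal M * volume A * volume Ω + ENNReal.ofReal Dd * J) * (volume A)⁻¹ :=
          mul_le_mul_left hmain _
      _ = ENNReal.ofReal M * volume Ω * (volume A * (volume A)⁻¹)
            + ENNReal.ofReal Dd * J * (volume A)⁻¹ := by ring
      _ = ENNReal.ofReal M * volume Ω + ENNReal.ofReal Dd * J * (volume A)⁻¹ := by
          rw [hAinv, mul_one]
      _ ≤ ENNReal.ofReal M * volume Ω
            + ENNReal.ofReal Dd * (ENNReal.ofReal (2 ^ (d + 1)) * G * volume Ω) * (volume A)⁻¹ := by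
          refine add_le_add le_rfl (mul_le_mul_left (mul_le_mul_right hJ _) _)
      _ = ENNReal.ofReal M * volume Ω
            + ENNReal.ofReal Dd * ENNReal.ofReal (2 ^ (d + 1)) * G * (volume Ω * (volume A)⁻¹) := by
          ring
      _ ≤ ENNReal.ofReal M * volume Ω
            + ENNReal.ofReal Dd * ENNReal.ofReal (2 ^ (d + 1)) * G * 2 :=
          add_le_add le_rfl (mul_le_mul_right hΩAinv _)
      _ = ENNReal.ofReal M * volume Ω
            + ENNReal.ofReal Dd * ENNReal.ofReal (2 ^ (d + 2)) * G := by
          have h2eq : (2:ℝ≥0∞) * ENNReal.ofReal ((2:ℝ) ^ (d + 1)) = ENNReal.ofReal ((2:ℝ) ^ (d + 2)) := by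
            rw [show ((2:ℝ) ^ (d + 2)) = 2 * 2 ^ (d + 1) by ring, ENNReal.ofReal_mul (by norm_num)]
            norm_num
          rw [← h2eq]
          ring
  -- convert back to reals
  have hC2 : (2 ^ (d + 2) * Dd * m) / m = 2 ^ (d + 2) * Dd := by field_simp
  have hRHSnn : 0 ≤ m * Real.exp (2 / m * K)
      + (2 ^ (d + 2) * Dd * m / m) * ∫ x in Ω, ‖fderiv ℝ v x‖ := by positivity
  refine (ENNReal.ofReal_le_ofReal_iff hRHSnn).1 ?_
  calc ENNReal.ofReal (∫ x in Ω, v x) = X := hX_def.symm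
    _ ≤ ENNReal.ofReal M * volume Ω + ENNReal.ofReal Dd * ENNReal.ofReal (2 ^ (d + 2)) * G :=
        hfinal
    _ = ENNReal.ofReal (m * M + (2 ^ (d + 2) * Dd * m / m) * ∫ x in Ω, ‖fderiv ℝ v x‖) := by
        have hMpos : (0:ℝ) ≤ M := (zero_lt_one.trans_le hM1).le
        rw [hC2]
        have hadd := ENNReal.ofReal_add (p := m * M)
          (q := (2 ^ (d + 2) * Dd) * ∫ x in Ω, ‖fderiv ℝ v x‖) (by positivity) (by positivity)
        rw [hadd]
        congr 1
        · rw [mul_comm m M, ENNReal.ofReal_mul hMpos, hm_def, ENNReal.ofReal_toReal hμfin.ne]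
        · rw [← hGof, ← ENNReal.ofReal_mul hDd.le, ← ENNReal.ofReal_mul (by positivity)]
          congr 1
          ring

end main


/-- Generalized Poincaré inequality with logarithmic correction: on a nonempty bounded
convex open set `Ω ⊆ ℝ^d`, there are constants `C₁, C₂ > 0` (depending only on `Ω`) such
that every nonnegative differentiable `v` with `v` and `‖Dv‖` integrable on `Ω` satisfies
`∫_Ω v ≤ |Ω|·exp(C₁·∫_Ω (log v)⁺) + (C₂/|Ω|)·∫_Ω ‖Dv‖`. -/
theorem log_poincare (d : ℕ) (Ω : Set (EuclideanSpace ℝ (Fin d)))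
    (hne : Ω.Nonempty) (hbd : Bornology.IsBounded Ω) (hconv : Convex ℝ Ω)
    (hopen : IsOpen Ω) :
    ∃ C₁ C₂ : ℝ, 0 < C₁ ∧ 0 < C₂ ∧
      ∀ v : EuclideanSpace ℝ (Fin d) → ℝ,
        (∀ x ∈ Ω, DifferentiableAt ℝ v x) →
        (∀ x ∈ Ω, 0 ≤ v x) →
        IntegrableOn v Ω volume →
        IntegrableOn (fun x => ‖fderiv ℝ v x‖) Ω volume →
        ∫ x in Ω, v x ≤
          (volume Ω).toReal * Real.exp (C₁ * ∫ x in Ω, max (Real.log (v x)) 0)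
            + (C₂ / (volume Ω).toReal) * ∫ x in Ω, ‖fderiv ℝ v x‖ := by
  exact main_thm Ω hne hbd hconv hopen
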